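/- Let G be a finite group and H = {h_1, …, h_d} a minimal generating set of G with d ≥ 3. Let S = {e, h_1, h_1^{−1}h_2, h_2^{−1}h_3, …, h_{d−1}^{−1}h_d} ⊆ G. If g ∈ G satisfies g·S = S (where g·S = {g·s : s ∈ S}), then g = e. -/

import Mathlib

/-- Let `G` be a finite group and `h 1, …, h d` a minimal generating set of `G` (no
proper subset generates) with `d ≥ 3`. Let
`S = {1, h 1, (h 1)⁻¹ * h 2, (h 2)⁻¹ * h 3, …, (h (d-1))⁻¹ * h d}`. If `g • S = S`
(left translation), then `g = 1`. -/
theorem eq_one_of_smul_set_eq (G : Type*) [Group G] [Fintype G]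
    (d : ℤ) (hd : 3 ≤ d) (h : ℤ → G)
    (hinj : Set.InjOn h (Set.Icc 1 d))
    (hgen : Subgroup.closure (h '' Set.Icc 1 d) = ⊤)
    (hmin : ∀ s : Set G, s ⊂ h '' Set.Icc 1 d → Subgroup.closure s ≠ ⊤)
    (g : G)
    (hS : (g * ·) ''
        (insert 1 (insert (h 1) ((fun i => (h i)⁻¹ * h (i + 1)) '' Set.Icc 1 (d - 1)))) =
      insert 1 (insert (h 1) ((fun i => (h i)⁻¹ * h (i + 1)) '' Set.Icc 1 (d - 1)))) :
    g = 1 := by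
  set S : Set G :=
    insert 1 (insert (h 1) ((fun i => (h i)⁻¹ * h (i + 1)) '' Set.Icc 1 (d - 1))) with hSdef
  set C : Subgroup G := Subgroup.closure (h '' Set.Icc 1 (d - 1)) with hCdef
  have hmem : ∀ j : ℤ, 1 ≤ j → j ≤ d - 1 → h j ∈ C := fun j h1 h2 =>
    Subgroup.subset_closure ⟨j, ⟨h1, h2⟩, rfl⟩
  -- fact 1 : h d ∉ C
  have hdC : h d ∉ C := by
    intro hdc
    refine hmin (h '' Set.Icc 1 (d - 1)) ⟨Set.image_mono (Set.Icc_subset_Icc_right (by omega)), ?_⟩ ?_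
    · intro hsub
      obtain ⟨j, ⟨hj1, hj2⟩, hje⟩ := hsub ⟨d, ⟨by omega, le_refl d⟩, rfl⟩
      have := hinj ⟨hj1, by omega⟩ ⟨by omega, le_refl d⟩ hje
      omega
    · rw [eq_top_iff, ← hgen]
      refine (Subgroup.closure_le _).mpr ?_
      rintro x ⟨j, ⟨hj1, hj2⟩, rfl⟩
      rcases eq_or_lt_of_le hj2 with he | hl
      · rw [he]; exact hdc
      · exact hmem j hj1 (by omega)
  -- fact 2 : h 1 ≠ 1
  have h1ne : h 1 ≠ 1 := by
    intro h1e
    refine hmin (h '' Set.Icc 2 d) ⟨Set.image_mono (Set.Icc_subset_Icc_left (by omega)), ?_⟩ ?_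
    · intro hsub
      obtain ⟨j, ⟨hj1, hj2⟩, hje⟩ := hsub ⟨1, ⟨le_refl 1, by omega⟩, rfl⟩
      have := hinj ⟨by omega, hj2⟩ ⟨le_refl 1, by omega⟩ hje
      omega
    · rw [eq_top_iff, ← hgen]
      refine (Subgroup.closure_le _).mpr ?_
      rintro x ⟨j, ⟨hj1, hj2⟩, rfl⟩
      rcases eq_or_lt_of_le hj1 with he | hl
      · rw [← he, h1e]; exact one_mem _
      · exact Subgroup.subset_closure ⟨j, ⟨by omega, hj2⟩, rfl⟩
  have hd1 : d - 1 + 1 = d := by ring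
  have hudC : (h (d - 1))⁻¹ * h d ∉ C := by
    intro hc
    have : h d ∈ C := by
      have := mul_mem (hmem (d - 1) (by omega) le_rfl) hc
      simpa using this
    exact hdC this
  -- every element of S outside C equals u_d
  have hSnotC : ∀ x ∈ S, x ∉ C → x = (h (d - 1))⁻¹ * h d := by
    rintro x hx hxc
    rcases hx with rfl | rfl | ⟨i, ⟨hi1, hi2⟩, rfl⟩
    · exact absurd (one_mem C) hxc
    · exact absurd (hmem 1 le_rfl (by omega)) hxc
    · rcases eq_or_lt_of_le hi2 with he | hl
      · subst he
        show (h (d-1))⁻¹ * h (d-1+1) = _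
        rw [hd1]
      · exact absurd (mul_mem (inv_mem (hmem i hi1 (by omega)))
          (hmem (i + 1) (by omega) (by omega))) hxc
  have hudS : (h (d - 1))⁻¹ * h d ∈ S := by
    refine Or.inr (Or.inr ⟨d - 1, ⟨by omega, le_rfl⟩, ?_⟩)
    simp only [hd1]
  have hgS : ∀ x ∈ S, g * x ∈ S := by
    intro x hx
    rw [← hS]
    exact ⟨x, hx, rfl⟩
  have h1S : (1 : G) ∈ S := Set.mem_insert _ _
  have hgmem : g ∈ S := by simpa using hgS 1 h1S
  by_cases hgC : g ∈ C
  · have hud := hgS _ hudS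
    have hnc : g * ((h (d - 1))⁻¹ * h d) ∉ C := by
      intro hc
      exact hudC (by simpa using mul_mem (inv_mem hgC) hc)
    have heq := hSnotC _ hud hnc
    exact mul_eq_right.mp heq
  · have hgu : g = (h (d - 1))⁻¹ * h d := hSnotC g hgmem hgC
    have hh1S : h 1 ∈ S := Or.inr (Or.inl rfl)
    have hh1 := hgS _ hh1S
    have hnc : g * h 1 ∉ C := by
      intro hc
      exact hgC (by simpa using mul_mem hc (inv_mem (hmem 1 le_rfl (by omega))))
    have heq := hSnotC _ hh1 hnc
    rw [← hgu] at heq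
    have : h 1 = 1 := mul_left_cancel (show g * h 1 = g * 1 by rw [mul_one, heq])
    exact absurd this h1ne
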